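/- Let (ν, P, P̃, U) ∈ K_d, let θ̃ be a nonzero complex number, θ = ν/θ̃, fix a positive integer N, and define x̃_k = θ̃ ∑_{j=0}^{d} p̃_j u_{k,j} x_j for k = 0,...,d. Then for every n ∈ I one has the polynomial identity x^n / θ^N = N! ∑_{ñ ∈ I} 𝒫(n', ñ') (p^ñ / ñ!) x̃^ñ in ℂ[x_0,...,x_d], where for λ ∈ I, λ' = (λ_1,...,λ_d) ∈ ℕ₀^d denotes λ with the 0-th coordinate dropped. -/

import Mathlib

open Matrix Finset MvPolynomial

/-- The multivariate Krawtchouk polynomial `𝒫(m, m̃)` of Griffiths, in the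
Gelfand hypergeometric form of Mizukawa–Tanaka, with `ω_{i,j} = 1 - u_{i,j}`.
The sum is over all `d × d` matrices `A` with entries in `{0,…,N}` whose
total entry sum is at most `N` (i.e. over `M_{d,N}`). -/
noncomputable def kraw (d N : ℕ) (U : Matrix (Fin (d+1)) (Fin (d+1)) ℂ)
    (m mt : Fin d → ℕ) : ℂ :=
  ∑ A : Fin d → Fin d → Fin (N+1),
    if (∑ i, ∑ j, (A i j : ℕ)) ≤ N then
      (∏ j, (ascPochhammer ℂ (∑ i, (A i j : ℕ))).eval (-(m j : ℂ))) *
        (∏ i, (ascPochhammer ℂ (∑ j, (A i j : ℕ))).eval (-(mt i : ℂ))) /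
        (ascPochhammer ℂ (∑ i, ∑ j, (A i j : ℕ))).eval (-(N : ℂ)) *
        ∏ i, ∏ j, (1 - U i.succ j.succ) ^ (A i j : ℕ) / ((A i j : ℕ).factorial : ℂ)
    else 0

/-! ### Auxiliary lemmas -/

lemma poch_eval_neg (m c : ℕ) :
    (ascPochhammer ℂ c).eval (-(m : ℂ)) = (-1)^c * (m.descFactorial c : ℂ) := by
  induction c with
  | zero => simp
  | succ c ih =>
    rw [ascPochhammer_succ_eval, ih, Nat.descFactorial_succ]
    rcases le_or_gt c m with h | h
    · push_cast [Nat.cast_sub h]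
      ring
    · rw [Nat.descFactorial_of_lt h]
      push_cast
      ring

lemma adT_eq_piAntidiag (k n : ℕ) :
    Finset.Nat.antidiagonalTuple k n = Finset.piAntidiag (univ : Finset (Fin k)) n := by
  ext f
  simp [Finset.Nat.mem_antidiagonalTuple, Finset.mem_piAntidiag]

lemma sum_pow_smul {R : Type*} [CommRing R] [Algebra ℂ R] {ι : Type*} [Fintype ι] [DecidableEq ι]
    (z : ι → R) (M : ℕ) :
    (∑ k, z k) ^ M = ∑ m ∈ Finset.piAntidiag (univ : Finset ι) M,
      ((M.factorial : ℂ) / ∏ i, ((m i).factorial : ℂ)) • ∏ i, z i ^ m i := by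
  rw [Finset.sum_pow_eq_sum_piAntidiag]
  refine Finset.sum_congr rfl fun m hm => ?_
  rw [Finset.mem_piAntidiag] at hm
  have hfact : (∏ i, ((m i).factorial : ℂ)) ≠ 0 := by
    refine Finset.prod_ne_zero_iff.mpr fun i _ => ?_
    exact_mod_cast (m i).factorial_ne_zero
  have hspec := Nat.multinomial_spec (univ : Finset ι) m
  rw [hm.1] at hspec
  have : ((M.factorial : ℂ)) = (∏ i, ((m i).factorial : ℂ)) * (Nat.multinomial univ m : ℂ) := by
    rw [← hspec]; push_cast; ring
  rw [Algebra.smul_def, this]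
  field_simp
  rw [map_natCast]

lemma prod_smul_c {R : Type*} [CommRing R] [Algebra ℂ R] {ι : Type*} (s : Finset ι)
    (b : ι → ℂ) (f : ι → R) :
    ∏ i ∈ s, b i • f i = (∏ i ∈ s, b i) • ∏ i ∈ s, f i := by
  simp only [Algebra.smul_def, map_prod]
  rw [Finset.prod_mul_distrib]

/-- The finset of tuples with total sum at most `m`. -/
noncomputable def bset (ι : Type*) [Fintype ι] [DecidableEq ι] (m : ℕ) : Finset (ι → ℕ) :=
  (Finset.range (m+1)).biUnion fun s => Finset.piAntidiag (univ : Finset ι) s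

lemma mem_bset {ι : Type*} [Fintype ι] [DecidableEq ι] {m : ℕ} {a : ι → ℕ} :
    a ∈ bset ι m ↔ ∑ i, a i ≤ m := by
  simp only [bset, Finset.mem_biUnion, Finset.mem_range, Finset.mem_piAntidiag]
  constructor
  · rintro ⟨s, hs, h1, -⟩
    exact le_trans (le_of_eq h1) (by omega)
  · intro h; exact ⟨∑ i, a i, by omega, rfl, fun i _ => Finset.mem_univ i⟩

lemma binom_multi {R : Type*} [CommRing R] [Algebra ℂ R] {ι : Type*} [Fintype ι] [DecidableEq ι]
    (m : ℕ) (S : R) (c : ι → ℂ) (z : ι → R) :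
    (S - ∑ k, algebraMap ℂ R (c k) * z k) ^ m
      = ∑ a ∈ bset ι m,
          ((-1)^(∑ k, a k) * (m.descFactorial (∑ k, a k) : ℂ) / (∏ k, ((a k).factorial : ℂ))
            * ∏ k, c k ^ a k) • ((∏ k, z k ^ a k) * S ^ (m - ∑ k, a k)) := by
  rw [sub_eq_add_neg, add_comm, add_pow]
  rw [bset, Finset.sum_biUnion]
  swap
  · intro s hs t ht hst
    simp only [Finset.disjoint_left, Finset.mem_piAntidiag]
    rintro a ⟨h1, -⟩ ⟨h2, -⟩
    exact hst (h1 ▸ h2 ▸ rfl)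
  refine Finset.sum_congr rfl fun s hs => ?_
  rw [Finset.mem_range] at hs
  have hneg : (-(∑ k, algebraMap ℂ R (c k) * z k)) ^ s
      = (-1 : ℂ)^s • (∑ k, algebraMap ℂ R (c k) * z k) ^ s := by
    rw [neg_pow]
    simp [Algebra.smul_def, map_pow]
  rw [hneg, Finset.sum_pow_eq_sum_piAntidiag, Finset.smul_sum, Finset.sum_mul, Finset.sum_mul]
  refine Finset.sum_congr rfl fun a ha => ?_
  rw [Finset.mem_piAntidiag] at ha
  have has : ∑ k, a k = s := ha.1
  subst has
  have hfact : (∏ k, ((a k).factorial : ℂ)) ≠ 0 := by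
    refine Finset.prod_ne_zero_iff.mpr fun i _ => ?_
    exact_mod_cast (a i).factorial_ne_zero
  have hmul : (Nat.multinomial univ a : ℂ)
      = ((∑ k, a k).factorial : ℂ) / ∏ k, ((a k).factorial : ℂ) := by
    field_simp
    rw [mul_comm]
    exact_mod_cast Nat.multinomial_spec (univ : Finset ι) a
  have hdesc : (m.descFactorial (∑ k, a k) : ℂ)
      = ((∑ k, a k).factorial : ℂ) * (m.choose (∑ k, a k) : ℂ) := by
    exact_mod_cast congrArg (Nat.cast : ℕ → ℂ) (Nat.descFactorial_eq_factorial_mul_choose m _)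
  have hstep : ((-1:ℂ)^(∑ k, a k)) • ((Nat.multinomial univ a : R)
        * ∏ k, (algebraMap ℂ R (c k) * z k) ^ a k) * S ^ (m - ∑ k, a k)
        * ((m.choose (∑ k, a k) : ℕ) : R)
      = (((-1:ℂ))^(∑ k, a k) * (Nat.multinomial univ a : ℂ) * (∏ k, c k ^ a k)
          * (m.choose (∑ k, a k) : ℂ)) • ((∏ k, z k ^ a k) * S ^ (m - ∑ k, a k)) := by
    simp only [Algebra.smul_def, _root_.map_mul, map_pow, map_prod, map_natCast, _root_.map_neg,
      _root_.map_one, mul_pow]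
    rw [Finset.prod_mul_distrib]
    ring
  rw [hstep]
  congr 1
  rw [hmul, hdesc]
  field_simp

/-- `d × d` matrices of naturals with total sum at most `N`. -/
noncomputable def aset (d N : ℕ) : Finset (Fin d → Fin d → ℕ) :=
  (Fintype.piFinset fun _ : Fin d => Fintype.piFinset fun _ : Fin d => Finset.range (N+1)).filter
    fun A => ∑ k, ∑ i, A k i ≤ N

lemma mem_aset {d N : ℕ} {A : Fin d → Fin d → ℕ} :
    A ∈ aset d N ↔ ∑ k, ∑ i, A k i ≤ N := by
  simp only [aset, Finset.mem_filter, Fintype.mem_piFinset, Finset.mem_range]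
  refine ⟨fun h => h.2, fun h => ⟨fun k i => ?_, h⟩⟩
  have h1 : A k i ≤ ∑ i', A k i' := Finset.single_le_sum (fun _ _ => Nat.zero_le _) (mem_univ i)
  have h2 : (∑ i', A k i') ≤ ∑ k', ∑ i', A k' i' :=
    Finset.single_le_sum (f := fun k' => ∑ i', A k' i') (fun _ _ => Nat.zero_le _) (mem_univ k)
  omega

lemma kraw_eq_sum (d N : ℕ) (U : Matrix (Fin (d+1)) (Fin (d+1)) ℂ) (m mt : Fin d → ℕ) :
    kraw d N U m mt = ∑ A ∈ aset d N,
      (∏ j, (ascPochhammer ℂ (∑ i, A i j)).eval (-(m j : ℂ))) *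
        (∏ i, (ascPochhammer ℂ (∑ j, A i j)).eval (-(mt i : ℂ))) /
        (ascPochhammer ℂ (∑ i, ∑ j, A i j)).eval (-(N : ℂ)) *
        ∏ i, ∏ j, (1 - U i.succ j.succ) ^ (A i j) / ((A i j).factorial : ℂ) := by
  rw [kraw, ← Finset.sum_filter]
  refine Finset.sum_bij' (fun A _ => fun k i => (A k i : ℕ))
    (fun B hB => fun k i => ⟨B k i, ?_⟩) ?_ ?_ ?_ ?_ ?_
  · rw [mem_aset] at hB
    have h1 : B k i ≤ ∑ i', B k i' := Finset.single_le_sum (fun _ _ => Nat.zero_le _) (mem_univ i)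
    have h2 : (∑ i', B k i') ≤ ∑ k', ∑ i', B k' i' :=
      Finset.single_le_sum (f := fun k' => ∑ i', B k' i') (fun _ _ => Nat.zero_le _) (mem_univ k)
    omega
  · intro A hA
    rw [mem_aset]
    exact (Finset.mem_filter.mp hA).2
  · intro B hB
    simp only [Finset.mem_filter, Finset.mem_univ, true_and]
    rw [mem_aset] at hB
    exact hB
  · intro A hA; rfl
  · intro B hB; rfl
  · intro A hA; rfl

/-- The common normal form of both sides. -/
noncomputable def termA {R : Type*} [CommRing R] [Algebra ℂ R] (d N : ℕ)
    (U : Matrix (Fin (d+1)) (Fin (d+1)) ℂ) (z : Fin (d+1) → R) (n : Fin (d+1) → ℕ)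
    (A : Fin d → Fin d → ℕ) : R :=
  ((∏ i, (ascPochhammer ℂ (∑ k, A k i)).eval (-(n i.succ : ℂ)))
    * ∏ k, ∏ i, (1 - U k.succ i.succ) ^ A k i / ((A k i).factorial : ℂ))
  • ((∏ k, z k.succ ^ (∑ i, A k i)) * (∑ j, z j) ^ (N - ∑ k, ∑ i, A k i))

lemma L1 {R : Type*} [CommRing R] [Algebra ℂ R] (d N : ℕ)
    (U : Matrix (Fin (d+1)) (Fin (d+1)) ℂ) (z : Fin (d+1) → R) (n : Fin (d+1) → ℕ)
    (hU1 : ∀ i, U 0 i = 1) (hU2 : ∀ k, U k 0 = 1) (hn : ∑ i, n i = N) :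
    ∏ i, (∑ k, algebraMap ℂ R (U k i) * z k) ^ n i = ∑ A ∈ aset d N, termA d N U z n A := by
  classical
  set S : R := ∑ j, z j with hS
  have hn' : n 0 + ∑ i : Fin d, n i.succ = N := by rw [← hn, Fin.sum_univ_succ]
  have hF : ∀ i : Fin (d+1), (∑ k, algebraMap ℂ R (U k i) * z k)
      = S - ∑ k : Fin d, algebraMap ℂ R (1 - U k.succ i) * z k.succ := by
    intro i
    rw [Fin.sum_univ_succ (f := fun k => algebraMap ℂ R (U k i) * z k), hU1 i, hS,
      Fin.sum_univ_succ (f := z)]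
    simp only [map_sub, _root_.map_one, sub_mul, one_mul, Finset.sum_sub_distrib]
    ring
  simp only [hF]
  rw [Fin.prod_univ_succ]
  have h0 : (S - ∑ k : Fin d, algebraMap ℂ R (1 - U k.succ (0 : Fin (d+1))) * z k.succ) = S := by
    simp [hU2]
  rw [h0]
  have hexp : ∀ i : Fin d,
      (S - ∑ k : Fin d, algebraMap ℂ R (1 - U k.succ i.succ) * z k.succ) ^ n i.succ
        = ∑ a ∈ bset (Fin d) (n i.succ),
          ((-1)^(∑ k, a k) * ((n i.succ).descFactorial (∑ k, a k) : ℂ)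
              / (∏ k, ((a k).factorial : ℂ))
            * ∏ k, (1 - U k.succ i.succ) ^ a k)
            • ((∏ k, z k.succ ^ a k) * S ^ (n i.succ - ∑ k, a k)) := by
    intro i
    exact binom_multi (n i.succ) S (fun k : Fin d => 1 - U k.succ i.succ)
      (fun k : Fin d => z k.succ)
  simp only [hexp]
  rw [Finset.prod_univ_sum, Finset.mul_sum]
  rw [show (∑ A ∈ aset d N, termA d N U z n A)
      = ∑ A ∈ (aset d N).filter (fun A => ∀ i, ∑ k, A k i ≤ n i.succ), termA d N U z n A by
    refine (Finset.sum_filter_of_ne fun A hA hne => ?_).symm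
    by_contra hcol
    push_neg at hcol
    obtain ⟨i, hi⟩ := hcol
    apply hne
    rw [termA]
    have : (ascPochhammer ℂ (∑ k, A k i)).eval (-(n i.succ : ℂ)) = 0 := by
      rw [poch_eval_neg, Nat.descFactorial_of_lt hi]
      simp
    rw [Finset.prod_eq_zero (Finset.mem_univ i) this]
    simp]
  refine Finset.sum_bij' (fun φ _ => fun k i => φ i k) (fun A _ => fun i k => A k i)
    ?_ ?_ ?_ ?_ ?_
  · intro φ hφ
    rw [Fintype.mem_piFinset] at hφ
    have hcol : ∀ i, ∑ k, φ i k ≤ n i.succ := fun i => mem_bset.mp (hφ i)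
    rw [Finset.mem_filter, mem_aset]
    constructor
    · calc ∑ k, ∑ i, φ i k = ∑ i, ∑ k, φ i k := Finset.sum_comm
        _ ≤ ∑ i : Fin d, n i.succ := Finset.sum_le_sum fun i _ => hcol i
        _ ≤ N := by omega
    · exact hcol
  · intro A hA
    rw [Fintype.mem_piFinset]
    intro i
    rw [mem_bset]
    exact (Finset.mem_filter.mp hA).2 i
  · intro φ hφ; rfl
  · intro A hA; rfl
  · intro φ hφ
    rw [Fintype.mem_piFinset] at hφ
    have hcol : ∀ i, ∑ k, φ i k ≤ n i.succ := fun i => mem_bset.mp (hφ i)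
    rw [termA]
    have e1 : ∀ i : Fin d,
        ((-1:ℂ)^(∑ k, φ i k) * ((n i.succ).descFactorial (∑ k, φ i k) : ℂ)
              / (∏ k, ((φ i k).factorial : ℂ)) * ∏ k, (1 - U k.succ i.succ) ^ φ i k)
          = (ascPochhammer ℂ (∑ k, φ i k)).eval (-(n i.succ : ℂ))
              * ∏ k, ((1 - U k.succ i.succ) ^ φ i k / ((φ i k).factorial : ℂ)) := by
      intro i
      rw [poch_eval_neg, Finset.prod_div_distrib]
      ring
    simp only [e1]
    rw [prod_smul_c, Finset.prod_mul_distrib]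
    have e2 : (∏ i : Fin d, ∏ k : Fin d, ((1 - U k.succ i.succ) ^ φ i k / ((φ i k).factorial : ℂ)))
        = ∏ k : Fin d, ∏ i : Fin d, ((1 - U k.succ i.succ) ^ φ i k / ((φ i k).factorial : ℂ)) :=
      Finset.prod_comm
    have e3 : (∏ i : Fin d, ∏ k : Fin d, z k.succ ^ φ i k)
        = ∏ k : Fin d, z k.succ ^ (∑ i, φ i k) := by
      rw [Finset.prod_comm]
      exact Finset.prod_congr rfl fun k _ => Finset.prod_pow_eq_pow_sum _ _ _
    have e4 : S ^ n 0 * ∏ i : Fin d, S ^ (n i.succ - ∑ k, φ i k)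
        = S ^ (N - ∑ k, ∑ i, φ i k) := by
      rw [Finset.prod_pow_eq_pow_sum, ← pow_add]
      congr 1
      rw [Finset.sum_tsub_distrib univ (fun i _ => hcol i)]
      rw [show (∑ k, ∑ i, φ i k) = ∑ i, ∑ k, φ i k from Finset.sum_comm]
      have : (∑ i : Fin d, ∑ k, φ i k) ≤ ∑ i : Fin d, n i.succ :=
        Finset.sum_le_sum fun i _ => hcol i
      omega
    rw [e2, Finset.prod_mul_distrib, e3, mul_smul_comm]
    congr 1
    rw [← e4]
    ring

lemma L2 {R : Type*} [CommRing R] [Algebra ℂ R] (d N : ℕ)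
    (U : Matrix (Fin (d+1)) (Fin (d+1)) ℂ) (z : Fin (d+1) → R) (n : Fin (d+1) → ℕ) :
    ∑ nt ∈ Finset.Nat.antidiagonalTuple (d+1) N,
      ((N.factorial : ℂ) * kraw d N U (fun j => n j.succ) (fun j => nt j.succ)
        / ∏ i, ((nt i).factorial : ℂ)) • ∏ k, z k ^ nt k
    = ∑ A ∈ aset d N, termA d N U z n A := by
  classical
  simp only [kraw_eq_sum]
  have hswap : ∀ nt : Fin (d+1) → ℕ,
      ((N.factorial : ℂ) * (∑ A ∈ aset d N,
        (∏ j, (ascPochhammer ℂ (∑ i, A i j)).eval (-(n j.succ : ℂ))) *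
          (∏ i, (ascPochhammer ℂ (∑ j, A i j)).eval (-(nt i.succ : ℂ))) /
          (ascPochhammer ℂ (∑ i, ∑ j, A i j)).eval (-(N : ℂ)) *
          ∏ i, ∏ j, (1 - U i.succ j.succ) ^ (A i j) / ((A i j).factorial : ℂ))
        / ∏ i, ((nt i).factorial : ℂ)) • ∏ k, z k ^ nt k
      = ∑ A ∈ aset d N,
        ((N.factorial : ℂ) *
          ((∏ j, (ascPochhammer ℂ (∑ i, A i j)).eval (-(n j.succ : ℂ))) *
          (∏ i, (ascPochhammer ℂ (∑ j, A i j)).eval (-(nt i.succ : ℂ))) /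
          (ascPochhammer ℂ (∑ i, ∑ j, A i j)).eval (-(N : ℂ)) *
          ∏ i, ∏ j, (1 - U i.succ j.succ) ^ (A i j) / ((A i j).factorial : ℂ))
        / ∏ i, ((nt i).factorial : ℂ)) • ∏ k, z k ^ nt k := by
    intro nt
    rw [Finset.mul_sum, Finset.sum_div, Finset.sum_smul]
  simp only [hswap]
  rw [Finset.sum_comm]
  refine Finset.sum_congr rfl fun A hA => ?_
  rw [mem_aset] at hA
  rw [termA]
  set S : R := ∑ j, z j with hS
  set r : Fin d → ℕ := fun k => ∑ i, A k i with hr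
  set tot : ℕ := ∑ k, ∑ i, A k i with htot
  set PC : ℂ := ∏ j, (ascPochhammer ℂ (∑ i, A i j)).eval (-(n j.succ : ℂ)) with hPC
  set W : ℂ := ∏ i, ∏ j, (1 - U i.succ j.succ) ^ (A i j) / ((A i j).factorial : ℂ) with hW
  rw [show (∑ nt ∈ Finset.Nat.antidiagonalTuple (d+1) N,
      ((N.factorial : ℂ) * (PC * (∏ k, (ascPochhammer ℂ (r k)).eval (-(nt k.succ : ℂ)))
          / (ascPochhammer ℂ tot).eval (-(N : ℂ)) * W)
        / ∏ i, ((nt i).factorial : ℂ)) • ∏ k, z k ^ nt k)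
    = ∑ nt ∈ (Finset.Nat.antidiagonalTuple (d+1) N).filter (fun nt => ∀ k, r k ≤ nt k.succ),
      ((N.factorial : ℂ) * (PC * (∏ k, (ascPochhammer ℂ (r k)).eval (-(nt k.succ : ℂ)))
          / (ascPochhammer ℂ tot).eval (-(N : ℂ)) * W)
        / ∏ i, ((nt i).factorial : ℂ)) • ∏ k, z k ^ nt k from
    (Finset.sum_filter_of_ne fun nt hnt hne => ?_).symm]
  swap
  · by_contra hrow
    push_neg at hrow
    obtain ⟨k, hk⟩ := hrow
    apply hne
    have : (ascPochhammer ℂ (r k)).eval (-(nt k.succ : ℂ)) = 0 := by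
      rw [poch_eval_neg, Nat.descFactorial_of_lt hk]; simp
    rw [Finset.prod_eq_zero (Finset.mem_univ k) this]
    simp
  have hrtot : ∑ k, r k = tot := rfl
  have hPN : (ascPochhammer ℂ tot).eval (-(N : ℂ))
      = (-1)^tot * (N.descFactorial tot : ℂ) := poch_eval_neg N tot
  have hsum : (S ^ (N - tot) : R) = ∑ m ∈ Finset.Nat.antidiagonalTuple (d+1) (N - tot),
      (((N-tot).factorial : ℂ) / ∏ i, ((m i).factorial : ℂ)) • ∏ i, z i ^ m i := by
    rw [adT_eq_piAntidiag, hS, sum_pow_smul]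
  rw [hsum, Finset.mul_sum, Finset.smul_sum]
  set rr : Fin (d+1) → ℕ := fun j => Fin.cases 0 r j with hrr
  have hrr0 : rr 0 = 0 := rfl
  have hrrs : ∀ k : Fin d, rr k.succ = r k := fun k => rfl
  have hrrsum : ∑ j, rr j = tot := by
    rw [Fin.sum_univ_succ]
    simp [hrr0, hrrs, hrtot]
  refine Finset.sum_bij' (fun nt _ => fun j => nt j - rr j) (fun m _ => fun j => m j + rr j)
    ?_ ?_ ?_ ?_ ?_
  · intro nt hnt
    rw [Finset.mem_filter, Finset.Nat.mem_antidiagonalTuple] at hnt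
    have hge : ∀ j, rr j ≤ nt j := by
      intro j
      induction j using Fin.cases with
      | zero => simp [hrr0]
      | succ k => exact hnt.2 k
    rw [Finset.Nat.mem_antidiagonalTuple, Finset.sum_tsub_distrib univ (fun j _ => hge j),
      hnt.1, hrrsum]
  · intro m hm
    rw [Finset.Nat.mem_antidiagonalTuple] at hm
    rw [Finset.mem_filter, Finset.Nat.mem_antidiagonalTuple]
    constructor
    · rw [Finset.sum_add_distrib, hm, hrrsum]; omega
    · intro k
      show r k ≤ m k.succ + rr k.succ
      rw [hrrs]; omega
  · intro nt hnt
    rw [Finset.mem_filter, Finset.Nat.mem_antidiagonalTuple] at hnt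
    funext j
    have hge : rr j ≤ nt j := by
      induction j using Fin.cases with
      | zero => simp [hrr0]
      | succ k => exact hnt.2 k
    show nt j - rr j + rr j = nt j
    omega
  · intro m hm
    funext j
    show m j + rr j - rr j = m j
    omega
  · intro nt hnt
    rw [Finset.mem_filter, Finset.Nat.mem_antidiagonalTuple] at hnt
    have hge : ∀ j, rr j ≤ nt j := by
      intro j
      induction j using Fin.cases with
      | zero => simp [hrr0]
      | succ k => exact hnt.2 k
    have hz : (∏ k, z k ^ nt k)
        = (∏ k : Fin d, z k.succ ^ r k) * ∏ j, z j ^ (nt j - rr j) := by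
      rw [Fin.prod_univ_succ (f := fun j => z j ^ nt j),
        Fin.prod_univ_succ (f := fun j => z j ^ (nt j - rr j))]
      have h1 : ∀ k : Fin d, z k.succ ^ nt k.succ
          = z k.succ ^ r k * z k.succ ^ (nt k.succ - rr k.succ) := by
        intro k
        rw [← pow_add]
        congr 1
        have := hnt.2 k
        rw [hrrs]; omega
      rw [Finset.prod_congr rfl fun k _ => h1 k, Finset.prod_mul_distrib, hrr0, Nat.sub_zero]
      ring
    have hsc : (N.factorial : ℂ) * (PC * (∏ k, (ascPochhammer ℂ (r k)).eval (-(nt k.succ : ℂ)))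
          / (ascPochhammer ℂ tot).eval (-(N : ℂ)) * W)
        / ∏ i, ((nt i).factorial : ℂ)
      = PC * W * (((N-tot).factorial : ℂ) / ∏ j, (((nt j - rr j)).factorial : ℂ)) := by
      have h1 : ∀ k : Fin d, (ascPochhammer ℂ (r k)).eval (-(nt k.succ : ℂ))
          = (-1:ℂ)^(r k) * ((nt k.succ).descFactorial (r k) : ℂ) := fun k => poch_eval_neg _ _
      rw [Finset.prod_congr rfl fun k _ => h1 k, Finset.prod_mul_distrib,
        Finset.prod_pow_eq_pow_sum, hrtot, hPN]
      have hNfac : (N.factorial : ℂ) = ((N-tot).factorial : ℂ) * (N.descFactorial tot : ℂ) := by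
        exact_mod_cast congrArg (Nat.cast : ℕ → ℂ) (Nat.factorial_mul_descFactorial hA).symm
      have hkfac : ∀ k : Fin d, ((nt k.succ).factorial : ℂ)
          = ((nt k.succ - r k).factorial : ℂ) * ((nt k.succ).descFactorial (r k) : ℂ) := fun k => by
        exact_mod_cast congrArg (Nat.cast : ℕ → ℂ) (Nat.factorial_mul_descFactorial (hnt.2 k)).symm
      have hpf1 : (∏ i, ((nt i).factorial : ℂ))
          = ((nt 0).factorial : ℂ) * ∏ k : Fin d, ((nt k.succ).factorial : ℂ) :=
        Fin.prod_univ_succ _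
      have hpf2 : (∏ j, (((nt j - rr j)).factorial : ℂ))
          = ((nt 0).factorial : ℂ) * ∏ k : Fin d, ((nt k.succ - r k).factorial : ℂ) := by
        rw [Fin.prod_univ_succ (f := fun j => (((nt j - rr j)).factorial : ℂ))]
        simp only [hrr0, hrrs, Nat.sub_zero]
      rw [hpf1, hpf2, hNfac, Finset.prod_congr rfl fun k _ => hkfac k, Finset.prod_mul_distrib]
      have hne1 : (N.descFactorial tot : ℂ) ≠ 0 := by
        rw [Ne, Nat.cast_eq_zero, Nat.descFactorial_eq_zero_iff_lt]
        omega
      have hne2 : ((nt 0).factorial : ℂ) ≠ 0 := Nat.cast_ne_zero.mpr (Nat.factorial_ne_zero _)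
      have hne3 : (∏ k : Fin d, ((nt k.succ - r k).factorial : ℂ)) ≠ 0 :=
        Finset.prod_ne_zero_iff.mpr fun k _ => Nat.cast_ne_zero.mpr (Nat.factorial_ne_zero _)
      have hne4 : (∏ k : Fin d, ((nt k.succ).descFactorial (r k) : ℂ)) ≠ 0 :=
        Finset.prod_ne_zero_iff.mpr fun k _ => by
          rw [Ne, Nat.cast_eq_zero, Nat.descFactorial_eq_zero_iff_lt]
          have := hnt.2 k
          omega
      have hne5 : ((-1 : ℂ))^tot ≠ 0 := pow_ne_zero _ (by norm_num)
      have hne6 : ((N-tot).factorial : ℂ) ≠ 0 := Nat.cast_ne_zero.mpr (Nat.factorial_ne_zero _)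
      field_simp
    rw [hsc, hz]
    show _ = (PC * W) • ((∏ k : Fin d, z k.succ ^ ∑ i, A k i)
      * ((((N-tot).factorial : ℂ) / ∏ i, ((nt i - rr i).factorial : ℂ)) • ∏ i, z i ^ (nt i - rr i)))
    rw [mul_smul_comm, smul_smul]

lemma core {R : Type*} [CommRing R] [Algebra ℂ R] (d N : ℕ)
    (U : Matrix (Fin (d+1)) (Fin (d+1)) ℂ) (z : Fin (d+1) → R) (n : Fin (d+1) → ℕ)
    (hU1 : ∀ i, U 0 i = 1) (hU2 : ∀ k, U k 0 = 1) (hn : ∑ i, n i = N) :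
    ∏ i, (∑ k, algebraMap ℂ R (U k i) * z k) ^ n i
      = ∑ nt ∈ Finset.Nat.antidiagonalTuple (d+1) N,
        ((N.factorial : ℂ) * kraw d N U (fun j => n j.succ) (fun j => nt j.succ)
          / ∏ i, ((nt i).factorial : ℂ)) • ∏ k, z k ^ nt k :=
  (L1 d N U z n hU1 hU2 hn).trans (L2 d N U z n).symm

theorem stmt_10 (d : ℕ) (hd : 1 ≤ d) (ν : ℂ) (hν : ν ≠ 0)
    (p pt : Fin (d+1) → ℂ) (U : Matrix (Fin (d+1)) (Fin (d+1)) ℂ)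
    (hp0 : p 0 = 1/ν) (hpt0 : pt 0 = 1/ν)
    (hU : ∀ j, U 0 j = 1 ∧ U j 0 = 1)
    (hK : ν • (Matrix.diagonal p * U * Matrix.diagonal pt * U.transpose) = 1)
    (θt : ℂ) (hθt : θt ≠ 0) (θ : ℂ) (hθ : θ = ν / θt) (N : ℕ) (hN : 1 ≤ N)
    (xt : Fin (d+1) → MvPolynomial (Fin (d+1)) ℂ)
    (hxt : ∀ k, xt k = C θt * ∑ j, C (pt j * U k j) * X j)
    (n : Fin (d+1) → ℕ) (hn : ∑ i, n i = N) :
    (θ ^ N)⁻¹ • ∏ i, X i ^ n i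
      = (N.factorial : ℂ) • ∑ nt ∈ Finset.Nat.antidiagonalTuple (d+1) N,
          (kraw d N U (fun j => n j.succ) (fun j => nt j.succ)
            * (∏ i, p i ^ nt i) / ∏ i, ((nt i).factorial : ℂ)) • ∏ k, xt k ^ nt k := by
  have hθ0 : θ ≠ 0 := by rw [hθ]; exact div_ne_zero hν hθt
  -- inverse relation from hK
  have hinv : ∀ i j, (∑ k, p k * U k i * pt j * U k j) = if i = j then ν⁻¹ else 0 := by
    have h1 : (ν • Matrix.diagonal p) * U * (Matrix.diagonal pt * Uᵀ) = 1 := by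
      rw [← hK]
      simp only [Matrix.smul_mul, Matrix.mul_assoc]
    have h2 := mul_eq_one_comm.mp h1
    rw [Matrix.mul_assoc] at h2
    have h4 := mul_eq_one_comm.mp h2
    intro i j
    have h5 : ((Uᵀ * ((ν • Matrix.diagonal p) * U)) * Matrix.diagonal pt) i j
        = (1 : Matrix (Fin (d+1)) (Fin (d+1)) ℂ) i j := by rw [h4]
    rw [Matrix.mul_diagonal, Matrix.mul_apply, Matrix.one_apply] at h5
    simp only [Matrix.transpose_apply, Matrix.smul_mul, Matrix.smul_apply,
      Matrix.diagonal_mul, smul_eq_mul] at h5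
    have h6 : ν * ∑ k, p k * U k i * pt j * U k j = if i = j then 1 else 0 := by
      rw [← h5, Finset.sum_mul, Finset.mul_sum]
      exact Finset.sum_congr rfl fun k _ => by ring
    rcases eq_or_ne i j with rfl | hij
    · simp only [if_pos rfl, ↓reduceIte] at h6 ⊢
      field_simp at h6 ⊢
      rw [← h6]; congr 1; exact Finset.sum_congr rfl fun k _ => by ring
    · simp only [if_neg hij] at h6 ⊢
      exact (mul_eq_zero.mp h6).resolve_left hν
  -- substitution identity
  have hsub : ∀ i, (∑ k, C (U k i) * (C (p k) * xt k))
      = C θ⁻¹ * (X i : MvPolynomial (Fin (d+1)) ℂ) := by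
    intro i
    have hterm : ∀ k, C (U k i) * (C (p k) * xt k)
        = ∑ j, C (θt * (p k * U k i * pt j * U k j)) * X j := by
      intro k
      rw [hxt k, Finset.mul_sum, Finset.mul_sum, Finset.mul_sum]
      refine Finset.sum_congr rfl fun j _ => ?_
      simp only [MvPolynomial.C_mul]
      ring
    rw [Finset.sum_congr rfl fun k _ => hterm k, Finset.sum_comm]
    have hcol : ∀ j, (∑ k, C (θt * (p k * U k i * pt j * U k j)) * (X j : MvPolynomial (Fin (d+1)) ℂ))
        = C (θt * if i = j then ν⁻¹ else 0) * X j := by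
      intro j
      rw [← Finset.sum_mul, ← map_sum]
      congr 2
      rw [← Finset.mul_sum, hinv i j]
    rw [Finset.sum_congr rfl fun j _ => hcol j]
    rw [Finset.sum_eq_single i]
    · rw [if_pos rfl]
      congr 2
      rw [hθ]
      field_simp
    · intro j _ hji
      rw [if_neg (Ne.symm hji)]
      simp
    · intro h
      exact absurd (Finset.mem_univ i) h
  -- apply the core identity
  have hcore := core d N U (fun k => C (p k) * xt k) n
    (fun i => (hU i).1) (fun k => (hU k).2) hn
  simp only [MvPolynomial.algebraMap_eq] at hcore
  simp only [hsub] at hcore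
  have hLHS : (∏ i, (C θ⁻¹ * (X i : MvPolynomial (Fin (d+1)) ℂ)) ^ n i)
      = (θ ^ N)⁻¹ • ∏ i, (X i : MvPolynomial (Fin (d+1)) ℂ) ^ n i := by
    simp only [mul_pow]
    rw [Finset.prod_mul_distrib, Finset.prod_pow_eq_pow_sum, hn, ← MvPolynomial.C_pow,
      ← inv_pow, MvPolynomial.smul_eq_C_mul]
  rw [← hLHS, hcore]
  rw [Finset.smul_sum]
  refine Finset.sum_congr rfl fun nt hnt => ?_
  have hzp : (∏ k, ((C (p k) : MvPolynomial (Fin (d+1)) ℂ) * xt k) ^ nt k)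
      = C (∏ k, p k ^ nt k) * ∏ k, xt k ^ nt k := by
    simp only [mul_pow, ← map_pow]
    rw [Finset.prod_mul_distrib, map_prod]
  rw [hzp, smul_smul]
  rw [MvPolynomial.smul_eq_C_mul, MvPolynomial.smul_eq_C_mul, ← mul_assoc]
  congr 1
  rw [← MvPolynomial.C_mul]
  congr 1
  ring
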